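/- Fix an integer r ≥ 2, a real t > 0, and h₀ ∈ (0,1]. Let C_0, C_1 : (0,h₀] → [0,1] satisfy C_0(h) + C_1(h) = 1 for all h, and let I_0, I_1 : (0,h₀] → [0,∞). Define α_i(h) = C_i(h)/(h² + I_i(h))^t and ω_i(h) = α_i(h)/(α_0(h) + α_1(h)) for i = 0,1. Suppose there is A > 0 such that for all h ∈ (0,h₀]: I_0(h) ≤ A·h², I_1(h) ≤ A·h², and |I_0(h) − I_1(h)| ≤ A·h^{r+1}. Then there is B > 0 such that for all h ∈ (0,h₀] and i = 0,1: |ω_i(h) − C_i(h)| ≤ B·h^{r-1}. -/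

import Mathlib

open Real Set

/-- MVT bound for rpow: `|y^t - x^t| ≤ t * max (m^(t-1)) (M^(t-1)) * |y - x|`. -/
lemma rpow_lipschitz (t m M x y : ℝ) (ht : 0 < t) (hm : 0 < m)
    (hmx : m ≤ x) (hxM : x ≤ M) (hmy : m ≤ y) (hyM : y ≤ M) :
    |y ^ t - x ^ t| ≤ t * max (m ^ (t - 1)) (M ^ (t - 1)) * |y - x| := by
  wlog hxy : x ≤ y generalizing x y
  · rw [abs_sub_comm, abs_sub_comm y x]
    exact this y x hmy hyM hmx hxM (le_of_not_ge hxy)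
  rcases eq_or_lt_of_le hxy with h | h
  · simp [h]
  have hx0 : 0 < x := lt_of_lt_of_le hm hmx
  have key : ∃ c ∈ Ioo x y, t * c ^ (t - 1) = (y ^ t - x ^ t) / (y - x) := by
    apply exists_hasDerivAt_eq_slope (fun z => z ^ t) (fun z => t * z ^ (t - 1)) h
    · intro z hz
      have hz0 : z ≠ 0 := (lt_of_lt_of_le hx0 hz.1).ne'
      exact (Real.continuousAt_rpow_const z t (Or.inl hz0)).continuousWithinAt
    · intro z hz
      exact Real.hasDerivAt_rpow_const (Or.inl (lt_trans hx0 hz.1).ne')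
  obtain ⟨c, hc, hceq⟩ := key
  have hc0 : 0 < c := lt_trans hx0 hc.1
  have hcb : c ^ (t - 1) ≤ max (m ^ (t - 1)) (M ^ (t - 1)) := by
    rcases le_or_gt 1 t with h1 | h1
    · exact le_max_of_le_right
        (Real.rpow_le_rpow hc0.le (le_trans hc.2.le hyM) (by linarith))
    · exact le_max_of_le_left
        (Real.rpow_le_rpow_of_nonpos hm (le_trans hmx hc.1.le) (by linarith))
  have hyx : 0 < y - x := sub_pos.mpr h
  have heq : y ^ t - x ^ t = t * c ^ (t - 1) * (y - x) := by
    rw [hceq]; field_simp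
  rw [heq, abs_mul, abs_of_pos hyx,
    abs_of_nonneg (by positivity : (0:ℝ) ≤ t * c ^ (t - 1))]
  have hcpow : 0 < c ^ (t - 1) := Real.rpow_pos_of_pos hc0 _
  nlinarith [mul_nonneg (mul_nonneg ht.le (sub_nonneg.mpr hcb)) hyx.le]

/-- Key algebraic bound for one WENO weight. -/
lemma weno_key (t c0 c1 x y m M : ℝ) (ht : 0 < t)
    (hc0 : 0 ≤ c0) (hc0' : c0 ≤ 1) (hc1 : 0 ≤ c1) (hc1' : c1 ≤ 1) (hsum : c0 + c1 = 1)
    (hm : 0 < m) (hmx : m ≤ x) (hxM : x ≤ M) (hmy : m ≤ y) (hyM : y ≤ M) :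
    |c0 / x ^ t / (c0 / x ^ t + c1 / y ^ t) - c0|
      ≤ t * max (m ^ (t - 1)) (M ^ (t - 1)) * |y - x| / m ^ t := by
  have hx0 : 0 < x := lt_of_lt_of_le hm hmx
  have hy0 : 0 < y := lt_of_lt_of_le hm hmy
  have hd0 : 0 < x ^ t := Real.rpow_pos_of_pos hx0 t
  have hd1 : 0 < y ^ t := Real.rpow_pos_of_pos hy0 t
  have hmt : 0 < m ^ t := Real.rpow_pos_of_pos hm t
  have hd0m : m ^ t ≤ x ^ t := Real.rpow_le_rpow hm.le hmx ht.le
  have hd1m : m ^ t ≤ y ^ t := Real.rpow_le_rpow hm.le hmy ht.le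
  have hc1e : c1 = 1 - c0 := by linarith
  subst hc1e
  set d0 := x ^ t with hd0def
  set d1 := y ^ t with hd1def
  have hN : 0 < c0 * d1 + (1 - c0) * d0 := by nlinarith
  have hNm : m ^ t ≤ c0 * d1 + (1 - c0) * d0 := by nlinarith
  have hSpos : 0 < c0 / d0 + (1 - c0) / d1 := by
    have hS : c0 / d0 + (1 - c0) / d1 = (c0 * d1 + (1 - c0) * d0) / (d0 * d1) := by
      field_simp
    rw [hS]; positivity
  have heq : c0 / d0 / (c0 / d0 + (1 - c0) / d1) - c0
      = c0 * (1 - c0) * (d1 - d0) / (c0 * d1 + (1 - c0) * d0) := by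
    rw [div_sub' hSpos.ne', div_eq_div_iff hSpos.ne' hN.ne']
    field_simp
    ring
  rw [heq, abs_div, abs_of_pos hN, abs_mul, abs_mul,
    abs_of_nonneg hc0, abs_of_nonneg (by linarith : (0:ℝ) ≤ 1 - c0)]
  have hlip : |d1 - d0| ≤ t * max (m ^ (t - 1)) (M ^ (t - 1)) * |y - x| :=
    rpow_lipschitz t m M x y ht hm hmx hxM hmy hyM
  have habs : 0 ≤ |d1 - d0| := abs_nonneg _
  apply div_le_div₀ (by positivity) _ hmt hNm
  have h1 : c0 * (1 - c0) * |d1 - d0| ≤ |d1 - d0| := by nlinarith [mul_nonneg hc1 habs, mul_nonneg (mul_self_nonneg c0) habs]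
  linarith

theorem stmt4 (r : ℕ) (hr : 2 ≤ r) (t : ℝ) (ht : 0 < t)
    (h₀ : ℝ) (hh₀ : 0 < h₀) (hh₀1 : h₀ ≤ 1)
    (C0 C1 I0 I1 : ℝ → ℝ)
    (hC0 : ∀ h ∈ Set.Ioc (0 : ℝ) h₀, 0 ≤ C0 h ∧ C0 h ≤ 1)
    (hC1 : ∀ h ∈ Set.Ioc (0 : ℝ) h₀, 0 ≤ C1 h ∧ C1 h ≤ 1)
    (hsum : ∀ h ∈ Set.Ioc (0 : ℝ) h₀, C0 h + C1 h = 1)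
    (hI0 : ∀ h ∈ Set.Ioc (0 : ℝ) h₀, 0 ≤ I0 h)
    (hI1 : ∀ h ∈ Set.Ioc (0 : ℝ) h₀, 0 ≤ I1 h)
    (A : ℝ) (hA : 0 < A)
    (hI0A : ∀ h ∈ Set.Ioc (0 : ℝ) h₀, I0 h ≤ A * h ^ 2)
    (hI1A : ∀ h ∈ Set.Ioc (0 : ℝ) h₀, I1 h ≤ A * h ^ 2)
    (hdiff : ∀ h ∈ Set.Ioc (0 : ℝ) h₀, |I0 h - I1 h| ≤ A * h ^ (r + 1)) :
    ∃ B > 0, ∀ h ∈ Set.Ioc (0 : ℝ) h₀,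
      |C0 h / (h ^ 2 + I0 h) ^ t /
          (C0 h / (h ^ 2 + I0 h) ^ t + C1 h / (h ^ 2 + I1 h) ^ t) - C0 h|
        ≤ B * h ^ (r - 1) ∧
      |C1 h / (h ^ 2 + I1 h) ^ t /
          (C0 h / (h ^ 2 + I0 h) ^ t + C1 h / (h ^ 2 + I1 h) ^ t) - C1 h|
        ≤ B * h ^ (r - 1) := by
  set K : ℝ := max 1 ((1 + A) ^ (t - 1)) with hK
  have hK1 : (1:ℝ) ≤ K := le_max_left _ _
  refine ⟨t * K * A, by positivity, fun h hh => ?_⟩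
  obtain ⟨hh1, hh2⟩ := hh
  have h2pos : 0 < h ^ 2 := by positivity
  have hAx : (0:ℝ) < 1 + A := by linarith
  -- bounds
  have hmx : h ^ 2 ≤ h ^ 2 + I0 h := by linarith [hI0 h ⟨hh1, hh2⟩]
  have hxM : h ^ 2 + I0 h ≤ (1 + A) * h ^ 2 := by linarith [hI0A h ⟨hh1, hh2⟩]
  have hmy : h ^ 2 ≤ h ^ 2 + I1 h := by linarith [hI1 h ⟨hh1, hh2⟩]
  have hyM : h ^ 2 + I1 h ≤ (1 + A) * h ^ 2 := by linarith [hI1A h ⟨hh1, hh2⟩]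
  have hdmax : max ((h ^ 2) ^ (t - 1)) (((1 + A) * h ^ 2) ^ (t - 1))
      ≤ K * (h ^ 2) ^ (t - 1) := by
    have h1 : ((1 + A) * h ^ 2) ^ (t - 1) = (1 + A) ^ (t - 1) * (h ^ 2) ^ (t - 1) :=
      Real.mul_rpow hAx.le h2pos.le
    apply max_le
    · nlinarith [Real.rpow_pos_of_pos h2pos (t - 1)]
    · rw [h1]
      exact mul_le_mul_of_nonneg_right (le_max_right _ _)
        (Real.rpow_pos_of_pos h2pos (t - 1)).le
  -- the final numeric bound
  have hfinal : t * max ((h ^ 2) ^ (t - 1)) (((1 + A) * h ^ 2) ^ (t - 1))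
      * (A * h ^ (r + 1)) / (h ^ 2) ^ t ≤ t * K * A * h ^ (r - 1) := by
    have hr1 : (h:ℝ) ^ (r + 1) = h ^ (r - 1) * h ^ 2 := by
      rw [← pow_add]
      congr 1
      omega
    have hratio : (h ^ 2) ^ (t - 1) / (h ^ 2) ^ t = (h ^ 2)⁻¹ := by
      rw [← Real.rpow_sub h2pos, show t - 1 - t = (-1 : ℝ) by ring,
        Real.rpow_neg_one]
    have hpt : (0:ℝ) < (h ^ 2) ^ t := Real.rpow_pos_of_pos h2pos t
    have hAh : (0:ℝ) ≤ A * h ^ (r + 1) := by positivity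
    have step : t * max ((h ^ 2) ^ (t - 1)) (((1 + A) * h ^ 2) ^ (t - 1))
        * (A * h ^ (r + 1)) / (h ^ 2) ^ t
        ≤ t * (K * (h ^ 2) ^ (t - 1)) * (A * h ^ (r + 1)) / (h ^ 2) ^ t := by
      exact (div_le_div_iff_of_pos_right hpt).mpr
        (mul_le_mul_of_nonneg_right (mul_le_mul_of_nonneg_left hdmax ht.le) hAh)
    refine le_trans step (le_of_eq ?_)
    calc t * (K * (h ^ 2) ^ (t - 1)) * (A * h ^ (r + 1)) / (h ^ 2) ^ t
        = t * K * A * h ^ (r - 1) * h ^ 2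
            * ((h ^ 2) ^ (t - 1) / (h ^ 2) ^ t) := by rw [hr1]; ring
      _ = t * K * A * h ^ (r - 1) := by
          rw [hratio, mul_assoc, mul_inv_cancel₀ h2pos.ne', mul_one]
  have hbd : t * max ((h ^ 2) ^ (t - 1)) (((1 + A) * h ^ 2) ^ (t - 1))
      * |I1 h - I0 h| / (h ^ 2) ^ t ≤ t * K * A * h ^ (r - 1) := by
    refine le_trans ?_ hfinal
    have hnum : |I1 h - I0 h| ≤ A * h ^ (r + 1) := by
      rw [abs_sub_comm]; exact hdiff h ⟨hh1, hh2⟩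
    have hmaxnn : (0:ℝ) ≤ t * max ((h ^ 2) ^ (t - 1)) (((1 + A) * h ^ 2) ^ (t - 1)) :=
      mul_nonneg ht.le (le_trans (Real.rpow_pos_of_pos h2pos (t - 1)).le (le_max_left _ _))
    exact (div_le_div_iff_of_pos_right (Real.rpow_pos_of_pos h2pos t)).mpr
      (mul_le_mul_of_nonneg_left hnum hmaxnn)
  constructor
  · have key := weno_key t (C0 h) (C1 h) (h ^ 2 + I0 h) (h ^ 2 + I1 h)
      (h ^ 2) ((1 + A) * h ^ 2) ht (hC0 h ⟨hh1, hh2⟩).1 (hC0 h ⟨hh1, hh2⟩).2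
      (hC1 h ⟨hh1, hh2⟩).1 (hC1 h ⟨hh1, hh2⟩).2 (hsum h ⟨hh1, hh2⟩)
      h2pos hmx hxM hmy hyM
    refine le_trans key ?_
    have : h ^ 2 + I1 h - (h ^ 2 + I0 h) = I1 h - I0 h := by ring
    rw [this]
    exact hbd
  · have key := weno_key t (C1 h) (C0 h) (h ^ 2 + I1 h) (h ^ 2 + I0 h)
      (h ^ 2) ((1 + A) * h ^ 2) ht (hC1 h ⟨hh1, hh2⟩).1 (hC1 h ⟨hh1, hh2⟩).2
      (hC0 h ⟨hh1, hh2⟩).1 (hC0 h ⟨hh1, hh2⟩).2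
      (by linarith [hsum h ⟨hh1, hh2⟩])
      h2pos hmy hyM hmx hxM
    rw [add_comm (C0 h / (h ^ 2 + I0 h) ^ t)]
    refine le_trans key ?_
    have : h ^ 2 + I0 h - (h ^ 2 + I1 h) = I0 h - I1 h := by ring
    rw [this, abs_sub_comm]
    exact hbd
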